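/- The Gaussian process posterior with an isotropic kernel is an equivariant prediction map with respect to rigid transformations: let k : ℝ → ℝ, let s ≥ 0, let x : Fin N → EuclideanSpace ℝ d be context inputs and y : Fin N → ℝ context outputs, and let K be the N×N matrix with entries K_{n n'} = k(‖x_n − x_{n'}‖) + s·(if n = n' then 1 else 0), assumed invertible. Define the posterior mean m(x★; x, y) = Σ_{n,n'} k(‖x★ − x_n‖) · (K⁻¹)_{n n'} · y_{n'} and the posterior covariance k_post(x★, x★'; x) = k(‖x★ − x★'‖) − Σ_{n,n'} k(‖x★ − x_n‖) · (K⁻¹)_{n n'} · k(‖x_{n'} − x★'‖). Then for every affine isometry equivalence τ of EuclideanSpace ℝ d and all targets x★, x★', m(τ x★; τ ∘ x, y) = m(x★; x, y) and k_post(τ x★, τ x★'; τ ∘ x) = k_post(x★, x★'; x). -/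
import Mathlib

open scoped BigOperators

/-- The Gram matrix of an isotropic kernel `K(a, b) = k ‖a - b‖` with noise
variance `s` on context inputs `x`. -/
noncomputable def gramIso {d N : ℕ} (k : ℝ → ℝ) (s : ℝ)
    (x : Fin N → EuclideanSpace ℝ (Fin d)) : Matrix (Fin N) (Fin N) ℝ :=
  fun n n' => k ‖x n - x n'‖ + s * (if n = n' then 1 else 0)

/-- The GP posterior mean with an isotropic kernel. -/
noncomputable def postMeanIso {d N : ℕ} (k : ℝ → ℝ) (s : ℝ)
    (x : Fin N → EuclideanSpace ℝ (Fin d)) (y : Fin N → ℝ)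
    (xstar : EuclideanSpace ℝ (Fin d)) : ℝ :=
  ∑ n : Fin N, ∑ n' : Fin N, k ‖xstar - x n‖ * (gramIso k s x)⁻¹ n n' * y n'

/-- The GP posterior covariance with an isotropic kernel. -/
noncomputable def postCovIso {d N : ℕ} (k : ℝ → ℝ) (s : ℝ)
    (x : Fin N → EuclideanSpace ℝ (Fin d))
    (xstar xstar' : EuclideanSpace ℝ (Fin d)) : ℝ :=
  k ‖xstar - xstar'‖ -
    ∑ n : Fin N, ∑ n' : Fin N,
      k ‖xstar - x n‖ * (gramIso k s x)⁻¹ n n' * k ‖x n' - xstar'‖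

lemma norm_tau_sub {d : ℕ} (τ : EuclideanSpace ℝ (Fin d) ≃ᵃⁱ[ℝ] EuclideanSpace ℝ (Fin d))
    (a b : EuclideanSpace ℝ (Fin d)) : ‖τ a - τ b‖ = ‖a - b‖ := by
  rw [← dist_eq_norm, ← dist_eq_norm, τ.dist_map]

/-- the GP posterior with an isotropic kernel is an equivariant
prediction map with respect to rigid transformations. -/
theorem gp_isotropic_rigid_equivariant {d N : ℕ}
    (k : ℝ → ℝ) (s : ℝ) (hs : 0 ≤ s)
    (x : Fin N → EuclideanSpace ℝ (Fin d)) (y : Fin N → ℝ)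
    (hK : IsUnit (gramIso k s x)) :
    ∀ (τ : EuclideanSpace ℝ (Fin d) ≃ᵃⁱ[ℝ] EuclideanSpace ℝ (Fin d))
      (xstar xstar' : EuclideanSpace ℝ (Fin d)),
      postMeanIso k s (⇑τ ∘ x) y (τ xstar) = postMeanIso k s x y xstar ∧
      postCovIso k s (⇑τ ∘ x) (τ xstar) (τ xstar') =
        postCovIso k s x xstar xstar' := by
  intro τ xstar xstar'
  have hg : gramIso k s (⇑τ ∘ x) = gramIso k s x := by
    funext n n'
    simp [gramIso, norm_tau_sub]
  constructor
  · unfold postMeanIso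
    simp [hg, norm_tau_sub]
  · unfold postCovIso
    simp [hg, norm_tau_sub]
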